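/- For every $\rho > 0$, the function $t \mapsto \dfrac{\sinh(\rho)}{\sqrt{\sinh^2(t+\rho) - \sinh^2(\rho)}}$ is integrable on $(0,\infty)$ and $\displaystyle\int_0^{\infty} \frac{\sinh(\rho)}{\sqrt{\sinh^2(t+\rho) - \sinh^2(\rho)}}\,dt < \frac{\pi}{2}$. -/

import Mathlib

open Real MeasureTheory Set Filter Topology ENNReal

private lemma sqrt_tendsto_atTop' : Tendsto Real.sqrt atTop atTop := by
  refine tendsto_atTop.2 fun b => ?_
  filter_upwards [eventually_ge_atTop (b ^ 2)] with x hx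
  calc b ≤ |b| := le_abs_self b
    _ = Real.sqrt (b ^ 2) := (Real.sqrt_sq_eq_abs b).symm
    _ ≤ Real.sqrt x := Real.sqrt_le_sqrt hx

/-- For every `ρ > 0`, the function `t ↦ sinh(ρ)/√(sinh²(t+ρ) - sinh²(ρ))` is
integrable on `(0,∞)` and `∫_0^∞ sinh(ρ)/√(sinh²(t+ρ) - sinh²(ρ)) dt < π/2`. -/
theorem stmt_18 (ρ : ℝ) (hρ : 0 < ρ) :
    IntegrableOn (fun t : ℝ =>
      Real.sinh ρ / Real.sqrt (Real.sinh (t + ρ) ^ 2 - Real.sinh ρ ^ 2))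
      (Set.Ioi 0) ∧
    (∫ t in Set.Ioi (0 : ℝ),
      Real.sinh ρ / Real.sqrt (Real.sinh (t + ρ) ^ 2 - Real.sinh ρ ^ 2))
      < Real.pi / 2 := by
  have hsρ : 0 < Real.sinh ρ := Real.sinh_pos_iff.2 hρ
  set f : ℝ → ℝ := fun t =>
    Real.sinh ρ / Real.sqrt (Real.sinh (t + ρ) ^ 2 - Real.sinh ρ ^ 2) with hf
  set g : ℝ → ℝ := fun t =>
    Real.sinh ρ * Real.cosh (t + ρ) /
      (Real.sinh (t + ρ) * Real.sqrt (Real.sinh (t + ρ) ^ 2 - Real.sinh ρ ^ 2)) with hg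
  set F : ℝ → ℝ := fun t =>
    Real.arctan (Real.sqrt (Real.sinh (t + ρ) ^ 2 - Real.sinh ρ ^ 2) / Real.sinh ρ) with hF
  -- basic positivity facts for t > 0
  have hu_pos : ∀ t : ℝ, t ∈ Set.Ioi (0:ℝ) →
      0 < Real.sinh (t + ρ) ^ 2 - Real.sinh ρ ^ 2 := by
    intro t ht
    have h1 : Real.sinh ρ < Real.sinh (t + ρ) :=
      Real.sinh_lt_sinh.2 (by linarith [Set.mem_Ioi.1 ht])
    nlinarith
  have hsinh_pos : ∀ t : ℝ, t ∈ Set.Ioi (0:ℝ) → 0 < Real.sinh (t + ρ) := by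
    intro t ht
    exact Real.sinh_pos_iff.2 (by have := Set.mem_Ioi.1 ht; linarith)
  -- derivative of F is g on Ioi 0
  have hderiv : ∀ t ∈ Set.Ioi (0:ℝ), HasDerivAt F (g t) t := by
    intro t ht
    have hu := hu_pos t ht
    have hsx := hsinh_pos t ht
    have hS : 0 < Real.sqrt (Real.sinh (t + ρ) ^ 2 - Real.sinh ρ ^ 2) :=
      Real.sqrt_pos.2 hu
    have h1 : HasDerivAt (fun t : ℝ => Real.sinh (t + ρ) ^ 2 - Real.sinh ρ ^ 2)
        (2 * Real.sinh (t + ρ) * Real.cosh (t + ρ)) t := by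
      have h0 : HasDerivAt (fun t : ℝ => t + ρ) 1 t := (hasDerivAt_id t).add_const ρ
      have h1 : HasDerivAt (fun t : ℝ => Real.sinh (t + ρ)) (Real.cosh (t + ρ)) t := by
        simpa using h0.sinh
      have := (h1.pow 2).sub_const (Real.sinh ρ ^ 2)
      exact this.congr_deriv (by ring)
    have h2 : HasDerivAt (fun t : ℝ => Real.sqrt (Real.sinh (t + ρ) ^ 2 - Real.sinh ρ ^ 2))
        ((2 * Real.sinh (t + ρ) * Real.cosh (t + ρ)) /
          (2 * Real.sqrt (Real.sinh (t + ρ) ^ 2 - Real.sinh ρ ^ 2))) t :=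
      h1.sqrt (ne_of_gt hu)
    have h3 := (h2.div_const (Real.sinh ρ))
    have h4 := (Real.hasDerivAt_arctan
      ((Real.sqrt (Real.sinh (t + ρ) ^ 2 - Real.sinh ρ ^ 2)) / Real.sinh ρ)).comp t h3
    refine h4.congr_deriv ?_
    symm
    have hsq : Real.sqrt (Real.sinh (t + ρ) ^ 2 - Real.sinh ρ ^ 2) ^ 2
        = Real.sinh (t + ρ) ^ 2 - Real.sinh ρ ^ 2 := Real.sq_sqrt hu.le
    rw [hg]
    field_simp
    nlinarith [hS, hsx, hsρ, Real.cosh_pos (t + ρ)]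
  -- continuity at 0 from the right
  have hFcont : ContinuousWithinAt F (Set.Ici (0:ℝ)) 0 := by
    have : Continuous F :=
      Real.continuous_arctan.comp ((Real.continuous_sqrt.comp
        (((Real.continuous_sinh.comp (continuous_id.add continuous_const)).pow 2).sub
          continuous_const)).div_const _)
    exact this.continuousWithinAt
  -- F tends to π/2 at infinity
  have hFtop : Tendsto F atTop (𝓝 (Real.pi / 2)) := by
    have hlow : Tendsto (fun x : ℝ => (Real.exp x - 1) / 2) atTop atTop :=
      (tendsto_atTop_add_const_right _ (-1) Real.tendsto_exp_atTop).atTop_div_const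
        (by norm_num)
    have hsinh_top : Tendsto Real.sinh atTop atTop := by
      refine tendsto_atTop_mono' atTop ?_ hlow
      filter_upwards [eventually_ge_atTop (0:ℝ)] with x hx
      rw [Real.sinh_eq]
      have : Real.exp (-x) ≤ 1 := Real.exp_le_one_iff.2 (by linarith)
      linarith
    have h1 : Tendsto (fun t : ℝ => Real.sinh (t + ρ) ^ 2 - Real.sinh ρ ^ 2) atTop atTop := by
      apply tendsto_atTop_add_const_right
      exact (tendsto_pow_atTop (two_ne_zero)).comp
        (hsinh_top.comp (tendsto_atTop_add_const_right _ ρ tendsto_id))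
    have h2 : Tendsto (fun t : ℝ =>
        Real.sqrt (Real.sinh (t + ρ) ^ 2 - Real.sinh ρ ^ 2) / Real.sinh ρ) atTop atTop :=
      (sqrt_tendsto_atTop'.comp h1).atTop_div_const hsρ
    exact (tendsto_nhds_of_tendsto_nhdsWithin Real.tendsto_arctan_atTop).comp h2
  -- g nonneg
  have hg_nonneg : ∀ t ∈ Set.Ioi (0:ℝ), 0 ≤ g t := by
    intro t ht
    have := hu_pos t ht
    have := hsinh_pos t ht
    have := Real.cosh_pos (t + ρ)
    have hS := Real.sqrt_nonneg (Real.sinh (t + ρ) ^ 2 - Real.sinh ρ ^ 2)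
    positivity
  have hg_int : IntegrableOn g (Set.Ioi 0) :=
    integrableOn_Ioi_deriv_of_nonneg hFcont hderiv hg_nonneg hFtop
  have hg_eq : (∫ t in Set.Ioi (0:ℝ), g t) = Real.pi / 2 := by
    rw [integral_Ioi_of_hasDerivAt_of_tendsto hFcont hderiv hg_int hFtop]
    have : F 0 = 0 := by simp [hF]
    rw [this, sub_zero]
  -- pointwise strict inequality f < g on Ioi 0
  have hlt : ∀ t ∈ Set.Ioi (0:ℝ), f t < g t := by
    intro t ht
    have hu := hu_pos t ht
    have hsx := hsinh_pos t ht
    have hS : 0 < Real.sqrt (Real.sinh (t + ρ) ^ 2 - Real.sinh ρ ^ 2) := Real.sqrt_pos.2 hu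
    have hcs : Real.sinh (t + ρ) < Real.cosh (t + ρ) := Real.sinh_lt_cosh _
    rw [hf, hg, div_lt_div_iff₀ hS (by positivity)]
    nlinarith [mul_pos (mul_pos hsρ hS) (sub_pos.2 hcs)]
  -- f is integrable (dominated by g)
  have hcontS : Continuous fun t : ℝ => Real.sqrt (Real.sinh (t + ρ) ^ 2 - Real.sinh ρ ^ 2) :=
    Real.continuous_sqrt.comp
      (((Real.continuous_sinh.comp (continuous_id.add continuous_const)).pow 2).sub
        continuous_const)
  have hf_meas : AEStronglyMeasurable f (volume.restrict (Set.Ioi (0:ℝ))) :=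
    (measurable_const.div hcontS.measurable).aestronglyMeasurable
  have hf_int : IntegrableOn f (Set.Ioi 0) := by
    refine hg_int.mono' hf_meas ?_
    rw [ae_restrict_iff' measurableSet_Ioi]
    filter_upwards with t ht
    have hfn : 0 ≤ f t := by
      have := (hu_pos t ht).le
      have hS := Real.sqrt_nonneg (Real.sinh (t + ρ) ^ 2 - Real.sinh ρ ^ 2)
      rw [hf]; positivity
    rw [Real.norm_eq_abs, abs_of_nonneg hfn]
    exact (hlt t ht).le
  refine ⟨hf_int, ?_⟩
  -- strict inequality in the integral
  have hdiff_pos : 0 < ∫ t in Set.Ioi (0:ℝ), (g t - f t) := by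
    rw [setIntegral_pos_iff_support_of_nonneg_ae]
    · have hsub : Set.Ioi (0:ℝ) ⊆ Function.support (fun t => g t - f t) := by
        intro t ht
        exact ne_of_gt (sub_pos.2 (hlt t ht))
      calc (0:ℝ≥0∞) < volume (Set.Ioi (0:ℝ)) := by simp
        _ ≤ volume (Function.support (fun t => g t - f t) ∩ Set.Ioi 0) :=
          measure_mono (fun t ht => ⟨hsub ht, ht⟩)
    · rw [EventuallyLE, ae_restrict_iff' measurableSet_Ioi]
      filter_upwards with t ht
      exact sub_nonneg.2 (hlt t ht).le
    · exact hg_int.sub hf_int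
  have : (∫ t in Set.Ioi (0:ℝ), (g t - f t))
      = (∫ t in Set.Ioi (0:ℝ), g t) - ∫ t in Set.Ioi (0:ℝ), f t :=
    integral_sub hg_int hf_int
  rw [this, hg_eq] at hdiff_pos
  linarith
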